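/- Let m_1 < ... < m_K be pairwise coprime positive integers with m_1 ≥ 3 and K > 2, M a positive integer, d = min_I (∏_{i∈I} m_i + ∏_{i∉I} m_i). Let N_1, N_2 be nonnegative integers with N_1, N_2 < M·d and N_1 ≡ N_2 (mod M) with common remainder r^c. Set Q_l = (N_l − r^c)/M for l = 1, 2. Then Q_1, Q_2 < d, and {Q_1, Q_2} is uniquely determined by the residue sets {Q_1 mod m_k, Q_2 mod m_k} for k = 1,...,K; consequently {N_1, N_2} is uniquely determined by the residue sets {N_1 mod (M m_k), N_2 mod (M m_k)}. -/

import Mathlib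

private lemma aux_eq_zero {n x : ℤ} (h : n ∣ x) (h2 : |x| < n) : x = 0 := by
  by_contra hx
  have h1 : n ∣ |x| := (dvd_abs _ _).mpr h
  have := Int.le_of_dvd (abs_pos.mpr hx) h1
  omega

private lemma arith_pos (pI pJ d a c S : ℤ)
    (hpI : 3 ≤ pI) (hpJ : 3 ≤ pJ) (hsum : d ≤ pI + pJ)
    (ha : pI ∣ a) (hc : pJ ∣ c) (hb : pI ∣ S - a) (he : pJ ∣ S - c)
    (hS : S = 0 ∨ S = pI * pJ ∨ S = -(pI * pJ))
    (bnda : |a| < d) (bndc : |c| < d) (bndb : |S - a| < d) (bnde : |S - c| < d)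
    (bnduv : |a + c - S| < d) (ha0 : 0 < a) (hc0 : 0 < c) : False := by
  have hdP : d ≤ pI * pJ := by nlinarith
  have hIa : pI ≤ a := Int.le_of_dvd ha0 ha
  have hJc : pJ ≤ c := Int.le_of_dvd hc0 hc
  rw [abs_lt] at bnda bndc bndb bnde bnduv
  rcases hS with rfl | rfl | rfl
  · linarith [bnduv.2]
  · -- S = pI * pJ
    have hb0 : 0 < pI * pJ - a := by linarith [bnda.2]
    have he0 : 0 < pI * pJ - c := by linarith [bndc.2]
    have hIb : pI ≤ pI * pJ - a := Int.le_of_dvd hb0 hb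
    have hJe : pJ ≤ pI * pJ - c := Int.le_of_dvd he0 he
    by_cases h2a : 2 * pI ≤ a
    · by_cases h2c : 2 * pJ ≤ c
      · linarith [bnda.2, bndc.2]
      · -- c = pJ
        push_neg at h2c
        obtain ⟨t, rfl⟩ := hc
        have hpJ0 : (0 : ℤ) < pJ := by linarith
        have ht0 : 0 < t := by
          rcases mul_pos_iff.mp hc0 with ⟨_, h⟩ | ⟨h, _⟩
          · exact h
          · linarith
        have ht2 : t < 2 := lt_of_mul_lt_mul_left (by linarith : pJ * t < pJ * 2) (le_of_lt hpJ0)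
        have ht1 : t = 1 := by omega
        subst ht1
        have hmul : (1 : ℤ) * 2 ≤ (pI - 2) * (pJ - 1) :=
          mul_le_mul (by linarith) (by linarith) (by linarith) (by linarith)
        nlinarith [bnde.2]
    · -- a = pI
      push_neg at h2a
      obtain ⟨t, rfl⟩ := ha
      have hpI0 : (0 : ℤ) < pI := by linarith
      have ht0 : 0 < t := by
        rcases mul_pos_iff.mp ha0 with ⟨_, h⟩ | ⟨h, _⟩
        · exact h
        · linarith
      have ht2 : t < 2 := lt_of_mul_lt_mul_left (by linarith : pI * t < pI * 2) (le_of_lt hpI0)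
      have ht1 : t = 1 := by omega
      subst ht1
      have hmul : (2 : ℤ) * 1 ≤ (pI - 1) * (pJ - 2) :=
        mul_le_mul (by linarith) (by linarith) (by linarith) (by linarith)
      nlinarith [bndb.2]
  · -- S = -(pI * pJ)
    have : -(pI * pJ) - a < -d := by nlinarith
    linarith [bndb.1]

private lemma arith (pI pJ d a c S : ℤ)
    (hpI : 3 ≤ pI) (hpJ : 3 ≤ pJ) (hsum : d ≤ pI + pJ)
    (ha : pI ∣ a) (hc : pJ ∣ c) (hb : pI ∣ S - a) (he : pJ ∣ S - c)
    (hSdvd : pI * pJ ∣ S)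
    (bnda : |a| < d) (bndc : |c| < d) (bndb : |S - a| < d) (bnde : |S - c| < d)
    (bnduv : |a + c - S| < d) (bndQ : |c - a| < d)
    (ha0 : a ≠ 0) (hc0 : c ≠ 0) : False := by
  have hdP : d ≤ pI * pJ := by nlinarith
  have hIa : pI ≤ |a| := Int.le_of_dvd (abs_pos.mpr ha0) ((dvd_abs _ _).mpr ha)
  have hJc : pJ ≤ |c| := Int.le_of_dvd (abs_pos.mpr hc0) ((dvd_abs _ _).mpr hc)
  -- S ∈ {0, P, -P}
  have hS : S = 0 ∨ S = pI * pJ ∨ S = -(pI * pJ) := by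
    obtain ⟨t, ht⟩ := hSdvd
    have htri : |S| ≤ |a| + |S - a| := by
      calc |S| = |a + (S - a)| := by ring_nf
        _ ≤ |a| + |S - a| := abs_add_le _ _
    have h2 : |S| < 2 * (pI * pJ) := by linarith [bnda, bndb]
    have hP0 : (0 : ℤ) < pI * pJ := by nlinarith
    rw [ht] at h2 ⊢
    rw [abs_lt] at h2
    have ht1 : -2 < t := by nlinarith
    have ht2 : t < 2 := by nlinarith
    interval_cases t
    · right; right; ring
    · left; ring
    · right; left; ring
  rcases ha0.lt_or_gt with hneg | hpos
  · rcases hc0.lt_or_gt with hcneg | hcpos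
    · -- both negative: negate
      refine arith_pos pI pJ d (-a) (-c) (-S) hpI hpJ hsum
        (dvd_neg.mpr ha) (dvd_neg.mpr hc) ?_ ?_ ?_ ?_ ?_ ?_ ?_ ?_ (by linarith) (by linarith)
      · rw [show -S - -a = -(S - a) by ring]; exact dvd_neg.mpr hb
      · rw [show -S - -c = -(S - c) by ring]; exact dvd_neg.mpr he
      · rcases hS with rfl | rfl | rfl
        · left; ring
        · right; right; ring
        · right; left; ring
      · rwa [abs_neg]
      · rwa [abs_neg]
      · rw [show -S - -a = -(S - a) by ring, abs_neg]; exact bndb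
      · rw [show -S - -c = -(S - c) by ring, abs_neg]; exact bnde
      · rw [show -a + -c - -S = -(a + c - S) by ring, abs_neg]; exact bnduv
    · -- a < 0 < c : c - a ≥ pI + pJ
      rw [abs_of_neg hneg] at hIa
      rw [abs_of_pos hcpos] at hJc
      rw [abs_lt] at bndQ
      linarith [bndQ.2]
  · rcases hc0.lt_or_gt with hcneg | hcpos
    · -- c < 0 < a
      rw [abs_of_pos hpos] at hIa
      rw [abs_of_neg hcneg] at hJc
      rw [abs_lt] at bndQ
      linarith [bndQ.1]
    · exact arith_pos pI pJ d a c S hpI hpJ hsum ha hc hb he hS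
        bnda bndc bndb bnde bnduv hpos hcpos

private lemma modlift (M r n Q : ℕ) (hr : r < M) (hn : 0 < n) :
    (M * Q + r) % (M * n) = M * (Q % n) + r := by
  have hM : 0 < M := by omega
  have h1 : r % (M * n) = r := Nat.mod_eq_of_lt (lt_of_lt_of_le hr (Nat.le_mul_of_pos_right M hn))
  have h2 : M * Q % (M * n) = M * (Q % n) := Nat.mul_mod_mul_left M Q n
  have h3 : M * (Q % n) + r < M * n := by
    have : Q % n < n := Nat.mod_lt Q hn
    have : M * (Q % n) + M ≤ M * n := by
      calc M * (Q % n) + M = M * (Q % n + 1) := by ring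
        _ ≤ M * n := Nat.mul_le_mul_left M (by omega)
    omega
  calc (M * Q + r) % (M * n) = (M * Q % (M * n) + r % (M * n)) % (M * n) := Nat.add_mod _ _ _
    _ = (M * (Q % n) + r) % (M * n) := by rw [h1, h2]
    _ = M * (Q % n) + r := Nat.mod_eq_of_lt h3

private lemma key4 : ∀ a b c e : ℕ, (a = c ∨ a = e) → (b = c ∨ b = e) →
    (c = a ∨ c = b) → (e = a ∨ e = b) → (a = c ∧ b = e) ∨ (a = e ∧ b = c) := by
  omega

private lemma key (K d : ℕ) (m : Fin K → ℕ) (hK : 2 < K)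
    (hmono : StrictMono m) (hm1 : 3 ≤ m ⟨0, by omega⟩)
    (hcop : ∀ i j, i ≠ j → Nat.Coprime (m i) (m j))
    (hd : IsLeast {x : ℕ | ∃ I : Finset (Fin K),
      x = (∏ i ∈ I, m i) + ∏ i ∈ Iᶜ, m i} d)
    (Q1 Q2 u v : ℕ) (hQ1 : Q1 < d) (hQ2 : Q2 < d) (hu : u < d) (hv : v < d)
    (h : ∀ k : Fin K, ({u, v} : Finset ℕ).image (· % m k) =
      ({Q1, Q2} : Finset ℕ).image (· % m k)) :
    ({u, v} : Finset ℕ) = ({Q1, Q2} : Finset ℕ) := by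
  have hm3 : ∀ i, 3 ≤ m i := by
    intro i
    refine le_trans hm1 (hmono.monotone ?_)
    simp [Fin.le_def]
  -- step 1
  have step1 : ∀ k : Fin K, (u % m k = Q1 % m k ∧ v % m k = Q2 % m k) ∨
      (u % m k = Q2 % m k ∧ v % m k = Q1 % m k) := by
    intro k
    have hu1 : u % m k ∈ ({Q1, Q2} : Finset ℕ).image (· % m k) := by
      rw [← h k]; exact Finset.mem_image_of_mem _ (by simp)
    have hv1 : v % m k ∈ ({Q1, Q2} : Finset ℕ).image (· % m k) := by
      rw [← h k]; exact Finset.mem_image_of_mem _ (by simp)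
    have hq1 : Q1 % m k ∈ ({u, v} : Finset ℕ).image (· % m k) := by
      rw [h k]; exact Finset.mem_image_of_mem _ (by simp)
    have hq2 : Q2 % m k ∈ ({u, v} : Finset ℕ).image (· % m k) := by
      rw [h k]; exact Finset.mem_image_of_mem _ (by simp)
    simp only [Finset.mem_image, Finset.mem_insert, Finset.mem_singleton] at hu1 hv1 hq1 hq2
    obtain ⟨x, hx, hxe⟩ := hu1
    obtain ⟨y, hy, hye⟩ := hv1
    obtain ⟨z, hz, hze⟩ := hq1
    obtain ⟨w, hw, hwe⟩ := hq2
    apply key4 (u % m k) (v % m k) (Q1 % m k) (Q2 % m k)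
    · rcases hx with rfl | rfl
      · left; omega
      · right; omega
    · rcases hy with rfl | rfl
      · left; omega
      · right; omega
    · rcases hz with rfl | rfl
      · left; omega
      · right; omega
    · rcases hw with rfl | rfl
      · left; omega
      · right; omega
  classical
  set I : Finset (Fin K) :=
    Finset.univ.filter (fun k => u % m k = Q1 % m k ∧ v % m k = Q2 % m k) with hI
  set pI : ℕ := ∏ i ∈ I, m i with hpIdef
  set pJ : ℕ := ∏ i ∈ Iᶜ, m i with hpJdef
  have hIprop : ∀ i ∈ I, u % m i = Q1 % m i ∧ v % m i = Q2 % m i := by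
    intro i hi
    exact (Finset.mem_filter.mp hi).2
  have hJprop : ∀ i ∈ Iᶜ, u % m i = Q2 % m i ∧ v % m i = Q1 % m i := by
    intro i hi
    rw [Finset.mem_compl] at hi
    rcases step1 i with hcase | hcase
    · exact absurd (Finset.mem_filter.mpr ⟨Finset.mem_univ i, hcase⟩) hi
    · exact hcase
  -- divisibility facts
  have hpair : ∀ (T : Finset (Fin K)),
      (T : Set (Fin K)).Pairwise (Function.onFun IsCoprime fun i => (m i : ℤ)) := by
    intro T i _ j _ hij
    exact Nat.Coprime.isCoprime (hcop i j hij)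
  have hdvd : ∀ (T : Finset (Fin K)) (x y : ℕ), (∀ i ∈ T, x % m i = y % m i) →
      ((∏ i ∈ T, m i : ℕ) : ℤ) ∣ (x : ℤ) - (y : ℤ) := by
    intro T x y hxy
    have : (∏ i ∈ T, (m i : ℤ)) ∣ (x : ℤ) - (y : ℤ) := by
      apply Finset.prod_dvd_of_coprime (hpair T)
      intro i hi
      have hmod : y ≡ x [MOD m i] := (hxy i hi).symm
      exact hmod.dvd
    simpa using this
  have hdA : (pI : ℤ) ∣ (u : ℤ) - (Q1 : ℤ) :=
    hdvd I u Q1 (fun i hi => (hIprop i hi).1)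
  have hdB : (pI : ℤ) ∣ (v : ℤ) - (Q2 : ℤ) :=
    hdvd I v Q2 (fun i hi => (hIprop i hi).2)
  have hdC : (pJ : ℤ) ∣ (u : ℤ) - (Q2 : ℤ) :=
    hdvd Iᶜ u Q2 (fun i hi => (hJprop i hi).1)
  have hdE : (pJ : ℤ) ∣ (v : ℤ) - (Q1 : ℤ) :=
    hdvd Iᶜ v Q1 (fun i hi => (hJprop i hi).2)
  -- coprimality
  have hcopP : Nat.Coprime pI pJ := by
    apply Nat.Coprime.prod_left
    intro i hi
    apply Nat.Coprime.prod_right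
    intro j hj
    apply hcop
    rw [Finset.mem_compl] at hj
    rintro rfl
    exact hj hi
  have hcopZ : IsCoprime (pI : ℤ) (pJ : ℤ) := Nat.Coprime.isCoprime hcopP
  -- d bounds
  have hsum : d ≤ pI + pJ := hd.2 ⟨I, rfl⟩
  have hprod : pI * pJ = ∏ i, m i := Finset.prod_mul_prod_compl I m
  have hdP : d ≤ pI * pJ := by
    set i0 : Fin K := ⟨0, by omega⟩ with hi0
    set i1 : Fin K := ⟨1, by omega⟩ with hi1
    have hd0 : d ≤ m i0 + ∏ i ∈ ({i0} : Finset (Fin K))ᶜ, m i := by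
      have := hd.2 ⟨{i0}, rfl⟩
      simpa using this
    have hR : 3 ≤ ∏ i ∈ ({i0} : Finset (Fin K))ᶜ, m i := by
      refine le_trans (hm3 i1) (Finset.single_le_prod' (fun j _ => by linarith [hm3 j]) ?_)
      simp [Finset.mem_compl, hi0, hi1, Fin.ext_iff]
    have hPP : m i0 * ∏ i ∈ ({i0} : Finset (Fin K))ᶜ, m i = ∏ i, m i := by
      have := Finset.prod_mul_prod_compl ({i0} : Finset (Fin K)) m
      simpa using this
    have h30 : 3 ≤ m i0 := hm3 i0
    rw [hprod, ← hPP]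
    nlinarith [hd0, hR, h30]
  -- the pieces are 1 or ≥ 3
  have hpI13 : pI = 1 ∨ 3 ≤ pI := by
    rcases I.eq_empty_or_nonempty with hIe | ⟨i, hi⟩
    · left; simp [hpIdef, hIe]
    · right
      exact le_trans (hm3 i) (Finset.single_le_prod' (fun j _ => by linarith [hm3 j]) hi)
  have hpJ13 : pJ = 1 ∨ 3 ≤ pJ := by
    rcases Iᶜ.eq_empty_or_nonempty with hIe | ⟨i, hi⟩
    · left; simp [hpJdef, hIe]
    · right
      exact le_trans (hm3 i) (Finset.single_le_prod' (fun j _ => by linarith [hm3 j]) hi)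
  -- P divides S
  have hdS : ((pI : ℤ) * pJ) ∣ ((u : ℤ) + v - Q1 - Q2) := by
    apply hcopZ.mul_dvd
    · have := dvd_add hdA hdB
      have heq : ((u : ℤ) - Q1) + ((v : ℤ) - Q2) = (u : ℤ) + v - Q1 - Q2 := by ring
      rwa [heq] at this
    · have := dvd_add hdC hdE
      have heq : ((u : ℤ) - Q2) + ((v : ℤ) - Q1) = (u : ℤ) + v - Q1 - Q2 := by ring
      rwa [heq] at this
  -- main claim
  have claim1 : u = Q1 ∨ u = Q2 := by
    by_contra hcon
    push_neg at hcon
    obtain ⟨hu1, hu2⟩ := hcon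
    have hA0 : (u : ℤ) - Q1 ≠ 0 := by
      intro hz; apply hu1; omega
    have hC0 : (u : ℤ) - Q2 ≠ 0 := by
      intro hz; apply hu2; omega
    have hIa : (pI : ℤ) ≤ |(u : ℤ) - Q1| :=
      Int.le_of_dvd (abs_pos.mpr hA0) ((dvd_abs _ _).mpr hdA)
    have hJc : (pJ : ℤ) ≤ |(u : ℤ) - Q2| :=
      Int.le_of_dvd (abs_pos.mpr hC0) ((dvd_abs _ _).mpr hdC)
    have hAbnd : |(u : ℤ) - Q1| < d := by rw [abs_lt]; omega
    have hCbnd : |(u : ℤ) - Q2| < d := by rw [abs_lt]; omega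
    have hpId : pI < d := by
      have : (pI : ℤ) < d := lt_of_le_of_lt hIa hAbnd
      exact_mod_cast this
    have hpJd : pJ < d := by
      have : (pJ : ℤ) < d := lt_of_le_of_lt hJc hCbnd
      exact_mod_cast this
    have hpI3 : 3 ≤ pI := by
      rcases hpI13 with h1 | h1
      · exfalso; rw [h1, one_mul] at hdP; omega
      · exact h1
    have hpJ3 : 3 ≤ pJ := by
      rcases hpJ13 with h1 | h1
      · exfalso; rw [h1, mul_one] at hdP; omega
      · exact h1
    refine arith (pI : ℤ) (pJ : ℤ) (d : ℤ) ((u : ℤ) - Q1) ((u : ℤ) - Q2)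
      ((u : ℤ) + v - Q1 - Q2) (by exact_mod_cast hpI3) (by exact_mod_cast hpJ3)
      (by exact_mod_cast hsum) hdA hdC ?_ ?_ (by exact_mod_cast hdS)
      hAbnd hCbnd ?_ ?_ ?_ ?_ hA0 hC0
    · rw [show (u : ℤ) + v - Q1 - Q2 - ((u : ℤ) - Q1) = (v : ℤ) - Q2 by ring]
      exact hdB
    · rw [show (u : ℤ) + v - Q1 - Q2 - ((u : ℤ) - Q2) = (v : ℤ) - Q1 by ring]
      exact hdE
    · rw [show (u : ℤ) + v - Q1 - Q2 - ((u : ℤ) - Q1) = (v : ℤ) - Q2 by ring, abs_lt]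
      omega
    · rw [show (u : ℤ) + v - Q1 - Q2 - ((u : ℤ) - Q2) = (v : ℤ) - Q1 by ring, abs_lt]
      omega
    · rw [show (u : ℤ) - Q1 + ((u : ℤ) - Q2) - ((u : ℤ) + v - Q1 - Q2) = (u : ℤ) - v by ring,
        abs_lt]
      omega
    · rw [show (u : ℤ) - Q2 - ((u : ℤ) - Q1) = (Q1 : ℤ) - Q2 by ring, abs_lt]
      omega
  have hdPZ : (d : ℤ) ≤ (pI : ℤ) * pJ := by exact_mod_cast hdP
  suffices hs : (u = Q1 ∧ v = Q2) ∨ (u = Q2 ∧ v = Q1) by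
    rcases hs with ⟨rfl, rfl⟩ | ⟨rfl, rfl⟩
    · rfl
    · exact Finset.pair_comm u v
  have final1 : u = Q1 → v = Q2 := by
    intro h'
    have hu' : (u : ℤ) = Q1 := by exact_mod_cast h'
    have hdvdB : ((pI : ℤ) * pJ) ∣ (v : ℤ) - Q2 := by
      apply hcopZ.mul_dvd hdB
      have := dvd_add hdE hdC
      have heq : ((v : ℤ) - Q1) + ((u : ℤ) - Q2) = (v : ℤ) - Q2 := by rw [hu']; ring
      rwa [heq] at this
    have : (v : ℤ) - Q2 = 0 := by
      apply aux_eq_zero hdvdB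
      rw [abs_lt]
      constructor <;> [nlinarith; nlinarith]
    omega
  have final2 : u = Q2 → v = Q1 := by
    intro h'
    have hu' : (u : ℤ) = Q2 := by exact_mod_cast h'
    have hdvdE : ((pI : ℤ) * pJ) ∣ (v : ℤ) - Q1 := by
      refine hcopZ.mul_dvd ?_ hdE
      have := dvd_add hdB hdA
      have heq : ((v : ℤ) - Q2) + ((u : ℤ) - Q1) = (v : ℤ) - Q1 := by rw [hu']; ring
      rwa [heq] at this
    have : (v : ℤ) - Q1 = 0 := by
      apply aux_eq_zero hdvdE
      rw [abs_lt]
      constructor <;> [nlinarith; nlinarith]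
    omega
  rcases claim1 with h' | h'
  · exact Or.inl ⟨h', final1 h'⟩
  · exact Or.inr ⟨h', final2 h'⟩

/-- part 2 of Corollary 1: equal common remainders, unique
determination within the dynamic range `M·d`. -/
theorem stmt_13 (K M d : ℕ) (m : Fin K → ℕ)
    (hK : 2 < K) (hM : 0 < M)
    (hmono : StrictMono m) (hm1 : 3 ≤ m ⟨0, by omega⟩)
    (hcop : ∀ i j, i ≠ j → Nat.Coprime (m i) (m j))
    (hd : IsLeast {x : ℕ | ∃ I : Finset (Fin K),
      x = (∏ i ∈ I, m i) + ∏ i ∈ Iᶜ, m i} d)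
    (N1 N2 rc Q1 Q2 : ℕ)
    (hN1 : N1 < M * d) (hN2 : N2 < M * d)
    (hrc1 : N1 % M = rc) (hrc2 : N2 % M = rc)
    (hQ1 : Q1 = (N1 - rc) / M) (hQ2 : Q2 = (N2 - rc) / M) :
    Q1 < d ∧ Q2 < d ∧
    (∀ Q1' Q2' : ℕ, Q1' < d → Q2' < d →
      (∀ k : Fin K,
        ({Q1', Q2'} : Finset ℕ).image (· % m k) =
        ({Q1, Q2} : Finset ℕ).image (· % m k)) →
      ({Q1', Q2'} : Finset ℕ) = ({Q1, Q2} : Finset ℕ)) ∧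
    (∀ N1' N2' : ℕ, N1' < M * d → N2' < M * d →
      (∀ k : Fin K,
        ({N1', N2'} : Finset ℕ).image (· % (M * m k)) =
        ({N1, N2} : Finset ℕ).image (· % (M * m k))) →
      ({N1', N2'} : Finset ℕ) = ({N1, N2} : Finset ℕ)) := by
  have hm3 : ∀ i, 3 ≤ m i := by
    intro i
    refine le_trans hm1 (hmono.monotone ?_)
    simp [Fin.le_def]
  have hrc : rc < M := hrc1 ▸ Nat.mod_lt _ hM
  -- N = M * Q + rc facts
  have hdiv : ∀ N Q : ℕ, N % M = rc → Q = (N - rc) / M → Q = N / M := by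
    intro N Q h1 h2
    have hdm := Nat.div_add_mod N M
    have : N - rc = M * (N / M) := by omega
    rw [h2, this, Nat.mul_div_cancel_left _ hM]
  have hQ1d : Q1 = N1 / M := hdiv N1 Q1 hrc1 hQ1
  have hQ2d : Q2 = N2 / M := hdiv N2 Q2 hrc2 hQ2
  have hN1e : N1 = M * Q1 + rc := by
    have := Nat.div_add_mod N1 M; rw [hQ1d]; omega
  have hN2e : N2 = M * Q2 + rc := by
    have := Nat.div_add_mod N2 M; rw [hQ2d]; omega
  have hQlt : ∀ N Q : ℕ, N < M * d → Q = N / M → Q < d := by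
    intro N Q h1 h2
    rw [h2]
    exact Nat.div_lt_of_lt_mul (by omega)
  have hQ1lt : Q1 < d := hQlt N1 Q1 hN1 hQ1d
  have hQ2lt : Q2 < d := hQlt N2 Q2 hN2 hQ2d
  refine ⟨hQ1lt, hQ2lt, ?_, ?_⟩
  · intro Q1' Q2' h1 h2 hk
    exact key K d m hK hmono hm1 hcop hd Q1 Q2 Q1' Q2' hQ1lt hQ2lt h1 h2 hk
  · intro N1' N2' h1' h2' hk
    set k0 : Fin K := ⟨0, by omega⟩ with hk0
    have hmk : ∀ k : Fin K, 0 < m k := fun k => by linarith [hm3 k]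
    -- common remainders of N1', N2'
    have hmodM : ∀ N' : ℕ, N' < M * d →
        (N' % (M * m k0) = N1 % (M * m k0) ∨ N' % (M * m k0) = N2 % (M * m k0)) →
        N' % M = rc := by
      intro N' _ hmem
      have e1 : N' % (M * m k0) % M = N' % M := Nat.mod_mod_of_dvd N' ⟨m k0, rfl⟩
      have e2 : N1 % (M * m k0) % M = N1 % M := Nat.mod_mod_of_dvd N1 ⟨m k0, rfl⟩
      have e3 : N2 % (M * m k0) % M = N2 % M := Nat.mod_mod_of_dvd N2 ⟨m k0, rfl⟩
      rcases hmem with h | h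
      · rw [← e1, h, e2, hrc1]
      · rw [← e1, h, e3, hrc2]
    have hmem1 : N1' % (M * m k0) = N1 % (M * m k0) ∨ N1' % (M * m k0) = N2 % (M * m k0) := by
      have := hk k0
      have hmem : N1' % (M * m k0) ∈ ({N1, N2} : Finset ℕ).image (· % (M * m k0)) := by
        rw [← this]; exact Finset.mem_image_of_mem _ (by simp)
      simp only [Finset.mem_image, Finset.mem_insert, Finset.mem_singleton] at hmem
      obtain ⟨x, hx, hxe⟩ := hmem
      rcases hx with rfl | rfl
      · left; omega
      · right; omega
    have hmem2 : N2' % (M * m k0) = N1 % (M * m k0) ∨ N2' % (M * m k0) = N2 % (M * m k0) := by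
      have := hk k0
      have hmem : N2' % (M * m k0) ∈ ({N1, N2} : Finset ℕ).image (· % (M * m k0)) := by
        rw [← this]; exact Finset.mem_image_of_mem _ (by simp)
      simp only [Finset.mem_image, Finset.mem_insert, Finset.mem_singleton] at hmem
      obtain ⟨x, hx, hxe⟩ := hmem
      rcases hx with rfl | rfl
      · left; omega
      · right; omega
    have hr1' : N1' % M = rc := hmodM N1' h1' hmem1
    have hr2' : N2' % M = rc := hmodM N2' h2' hmem2
    set Q1' : ℕ := N1' / M with hQ1'
    set Q2' : ℕ := N2' / M with hQ2'
    have hN1'e : N1' = M * Q1' + rc := by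
      have := Nat.div_add_mod N1' M; rw [hQ1']; omega
    have hN2'e : N2' = M * Q2' + rc := by
      have := Nat.div_add_mod N2' M; rw [hQ2']; omega
    have hQ1'lt : Q1' < d := hQlt N1' Q1' h1' rfl
    have hQ2'lt : Q2' < d := hQlt N2' Q2' h2' rfl
    set f : ℕ → ℕ := fun x => M * x + rc with hf
    have hfinj : Function.Injective f := by
      intro a b hab
      simp only [hf] at hab
      have := Nat.add_right_cancel hab
      exact Nat.eq_of_mul_eq_mul_left hM this
    have conv1 : ∀ (k : Fin K) (A B : ℕ),
        (({A, B} : Finset ℕ).image (· % m k)).image f =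
        ({M * A + rc, M * B + rc} : Finset ℕ).image (· % (M * m k)) := by
      intro k A B
      simp only [Finset.image_insert, Finset.image_singleton]
      rw [modlift M rc (m k) A hrc (hmk k), modlift M rc (m k) B hrc (hmk k)]
    have hQimg : ∀ k : Fin K, ({Q1', Q2'} : Finset ℕ).image (· % m k) =
        ({Q1, Q2} : Finset ℕ).image (· % m k) := by
      intro k
      apply Finset.image_injective hfinj
      rw [conv1 k Q1' Q2', conv1 k Q1 Q2, ← hN1'e, ← hN2'e, ← hN1e, ← hN2e]
      exact hk k
    have hQQ : ({Q1', Q2'} : Finset ℕ) = ({Q1, Q2} : Finset ℕ) :=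
      key K d m hK hmono hm1 hcop hd Q1 Q2 Q1' Q2' hQ1lt hQ2lt hQ1'lt hQ2'lt hQimg
    have : (({Q1', Q2'} : Finset ℕ)).image f = (({Q1, Q2} : Finset ℕ)).image f := by
      rw [hQQ]
    simpa only [Finset.image_insert, Finset.image_singleton, hf, ← hN1'e, ← hN2'e,
      ← hN1e, ← hN2e] using this
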